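/- Let σ be a derangement of {1,…,r} (σ(i) ≠ i for all i), let s = #{i : σ(i) < i}, and suppose there exists i₀ ∈ {1,…,r} with i₀ > r − s and σ(i₀) > i₀. Then ht(σ) = Σ_{i=1}^r |σ(i) − i| ≤ 2s(r − s) + 2(r − s − i₀); in particular ht(σ) < 2s(r − s). -/

import Mathlib

open scoped BigOperators

namespace PermStats

/-- The number of drops `c_<(σ) = #{i : σ(i) < i}` of a permutation of `Fin r`. -/
def drops {r : ℕ} (σ : Equiv.Perm (Fin r)) : ℕ :=
  (Finset.univ.filter fun i => σ i < i).card

/-- The number of jumps `c_>(σ) = #{i : σ(i) > i}` of a permutation of `Fin r`. -/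
def jumps {r : ℕ} (σ : Equiv.Perm (Fin r)) : ℕ :=
  (Finset.univ.filter fun i => i < σ i).card

/-- The height `ht(σ) = ∑_i |σ(i) - i|` of a permutation of `Fin r`. -/
def ht {r : ℕ} (σ : Equiv.Perm (Fin r)) : ℕ :=
  ∑ i : Fin r, Nat.dist ((σ i : ℕ)) (i : ℕ)

/-- Any finset of distinct naturals has sum at least `0 + 1 + ⋯ + (T.card - 1)`. -/
lemma sum_range_card_le (T : Finset ℕ) : ∑ i ∈ Finset.range T.card, i ≤ ∑ x ∈ T, x := by
  induction T using Finset.strongInduction with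
  | _ T ih =>
    rcases T.eq_empty_or_nonempty with rfl | hT
    · simp
    · set M := T.max' hT with hMdef
      have hM : M ∈ T := T.max'_mem hT
      have hpos : 0 < T.card := Finset.card_pos.mpr hT
      have hcard : (T.erase M).card = T.card - 1 := Finset.card_erase_of_mem hM
      have hsub : T.erase M ⊆ Finset.range M := by
        intro x hx
        have h1 := Finset.le_max' T x (Finset.mem_of_mem_erase hx)
        have h2 := Finset.ne_of_mem_erase hx
        simp only [Finset.mem_range]
        omega
      have hle : (T.erase M).card ≤ M := by
        simpa using Finset.card_le_card hsub
      have hsum : (∑ x ∈ T.erase M, x) + M = ∑ x ∈ T, x :=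
        Finset.sum_erase_add T _ hM
      have hih := ih (T.erase M) (Finset.erase_ssubset hM)
      have hrw : T.card = (T.card - 1) + 1 := by omega
      rw [hrw, Finset.sum_range_succ]
      rw [hcard] at hih
      omega

lemma twice_sum_range (n : ℕ) : (∑ i ∈ Finset.range n, (i : ℤ)) * 2 = n * (n - 1) := by
  induction n with
  | zero => simp
  | succ k ih =>
    rw [Finset.sum_range_succ]
    push_cast
    push_cast at ih
    ring_nf
    ring_nf at ih
    linarith

lemma natdist_cast (a b : ℕ) : ((Nat.dist a b : ℕ) : ℤ) = |(a : ℤ) - b| := by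
  rcases le_total a b with h | h
  · rw [Nat.dist_eq_sub_of_le h, abs_of_nonpos (show (a : ℤ) - (b : ℤ) ≤ 0 by omega)]
    omega
  · rw [Nat.dist_eq_sub_of_le_right h, abs_of_nonneg (show (0:ℤ) ≤ (a : ℤ) - (b : ℤ) by omega)]
    omega

theorem ht_lt_of_late_jump (r : ℕ) (σ : Equiv.Perm (Fin r)) (hσ : ∀ i, σ i ≠ i)
    (i0 : Fin r) (hi0 : r - drops σ < (i0 : ℕ) + 1) (hjump : i0 < σ i0) :
    (ht σ : ℤ) ≤ 2 * (drops σ : ℤ) * ((r : ℤ) - drops σ) +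
        2 * ((r : ℤ) - (drops σ : ℤ) - ((i0 : ℕ) + 1)) ∧
      (ht σ : ℤ) < 2 * (drops σ : ℤ) * ((r : ℤ) - drops σ) := by
  classical
  set D : Finset (Fin r) := Finset.univ.filter (fun i => σ i < i) with hD
  set J : Finset (Fin r) := Finset.univ.filter (fun i => i < σ i) with hJ
  have hDJ : Disjoint D J := by
    rw [Finset.disjoint_left]
    intro i hiD hiJ
    rw [hD, Finset.mem_filter] at hiD
    rw [hJ, Finset.mem_filter] at hiJ
    exact (lt_asymm hiJ.2) hiD.2
  have hunion : D ∪ J = Finset.univ := by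
    ext i
    simp only [hD, hJ, Finset.mem_union, Finset.mem_filter, Finset.mem_univ, true_and,
      iff_true]
    exact (hσ i).lt_or_gt
  have hcards : D.card + J.card = r := by
    have := Finset.card_union_of_disjoint hDJ
    rw [hunion, Finset.card_univ, Fintype.card_fin] at this
    omega
  have hs : drops σ = D.card := rfl
  set s := D.card with hsdef
  set m := J.card with hmdef
  have hi0J : i0 ∈ J := by
    rw [hJ, Finset.mem_filter]
    exact ⟨Finset.mem_univ _, hjump⟩
  have hm1 : 1 ≤ m := Finset.card_pos.mpr ⟨i0, hi0J⟩
  have hi0m : m ≤ (i0 : ℕ) := by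
    rw [hs] at hi0; omega
  -- the sum of all displacements is zero
  have hsum0 : ∑ i : Fin r, ((σ i : ℤ) - (i : ℤ)) = 0 := by
    rw [Finset.sum_sub_distrib,
      Equiv.sum_comp σ (fun i : Fin r => ((i : ℕ) : ℤ))]
    ring
  have hsplit : (∑ i ∈ D, ((σ i : ℤ) - (i : ℤ))) + ∑ i ∈ J, ((σ i : ℤ) - (i : ℤ)) = 0 := by
    rw [← Finset.sum_union hDJ, hunion]
    exact hsum0
  -- the height is twice the sum of the jumps' displacements
  have hht : (ht σ : ℤ) = 2 * ∑ i ∈ J, ((σ i : ℤ) - (i : ℤ)) := by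
    have h1 : (ht σ : ℤ) = ∑ i : Fin r, |(σ i : ℤ) - (i : ℤ)| := by
      rw [ht, Nat.cast_sum]
      exact Finset.sum_congr rfl fun i _ => natdist_cast _ _
    have h2 : (∑ i : Fin r, |(σ i : ℤ) - (i : ℤ)|) =
        (∑ i ∈ D, |(σ i : ℤ) - (i : ℤ)|) + ∑ i ∈ J, |(σ i : ℤ) - (i : ℤ)| := by
      rw [← Finset.sum_union hDJ, hunion]
    have hDabs : ∑ i ∈ D, |(σ i : ℤ) - (i : ℤ)| = ∑ i ∈ D, (-((σ i : ℤ) - (i : ℤ))) := by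
      refine Finset.sum_congr rfl fun i hi => ?_
      rw [hD, Finset.mem_filter] at hi
      have hlt : (σ i : ℕ) < (i : ℕ) := hi.2
      rw [abs_of_neg (show ((σ i : ℕ) : ℤ) - ((i : ℕ) : ℤ) < 0 by omega)]
    have hJabs : ∑ i ∈ J, |(σ i : ℤ) - (i : ℤ)| = ∑ i ∈ J, ((σ i : ℤ) - (i : ℤ)) := by
      refine Finset.sum_congr rfl fun i hi => ?_
      rw [hJ, Finset.mem_filter] at hi
      have hlt : (i : ℕ) < (σ i : ℕ) := hi.2
      rw [abs_of_nonneg (show (0:ℤ) ≤ ((σ i : ℕ) : ℤ) - ((i : ℕ) : ℤ) by omega)]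
    rw [h1, h2, hDabs, hJabs, Finset.sum_neg_distrib]
    linarith [hsplit]
  -- upper bound on the sum of the jump targets
  have hAnat : (∑ i ∈ J, (σ i : ℕ)) + ∑ k ∈ Finset.range s, k ≤ ∑ k ∈ Finset.range r, k := by
    have hinj : Function.Injective (fun i : Fin r => (σ i : ℕ)) :=
      Fin.val_injective.comp σ.injective
    set T := J.image (fun i : Fin r => (σ i : ℕ)) with hT
    have hTcard : T.card = m := by
      rw [hT, Finset.card_image_of_injective _ hinj]
    have hTsub : T ⊆ Finset.range r := by
      intro x hx
      rw [hT, Finset.mem_image] at hx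
      obtain ⟨i, _, rfl⟩ := hx
      exact Finset.mem_range.mpr (Fin.is_lt _)
    have hsumT : ∑ x ∈ T, x = ∑ i ∈ J, (σ i : ℕ) := by
      rw [hT]; exact Finset.sum_image (fun i _ j _ h => hinj h)
    have hC : ((Finset.range r) \ T).card = s := by
      rw [Finset.card_sdiff_of_subset hTsub, Finset.card_range, hTcard]; omega
    have h1 : ∑ k ∈ Finset.range s, k ≤ ∑ x ∈ (Finset.range r) \ T, x := by
      have := sum_range_card_le ((Finset.range r) \ T)
      rw [hC] at this; exact this
    have h2 : (∑ x ∈ (Finset.range r) \ T, x) + ∑ x ∈ T, x = ∑ x ∈ Finset.range r, x :=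
      Finset.sum_sdiff hTsub
    omega
  -- lower bound on the sum of the jump positions
  have hBnat : (∑ k ∈ Finset.range (m - 1), k) + (i0 : ℕ) ≤ ∑ i ∈ J, (i : ℕ) := by
    have herase : (∑ i ∈ J.erase i0, (i : ℕ)) + (i0 : ℕ) = ∑ i ∈ J, (i : ℕ) :=
      Finset.sum_erase_add J _ hi0J
    set T := (J.erase i0).image (fun i : Fin r => (i : ℕ)) with hT
    have hTcard : T.card = m - 1 := by
      rw [hT, Finset.card_image_of_injective _ Fin.val_injective,
        Finset.card_erase_of_mem hi0J]
    have hsumT : ∑ x ∈ T, x = ∑ i ∈ J.erase i0, (i : ℕ) := by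
      rw [hT]; exact Finset.sum_image (fun i _ j _ h => Fin.val_injective h)
    have := sum_range_card_le T
    rw [hTcard] at this
    omega
  -- move everything to ℤ
  have hA : (∑ i ∈ J, ((σ i : ℕ) : ℤ)) + ∑ k ∈ Finset.range s, (k : ℤ)
      ≤ ∑ k ∈ Finset.range r, (k : ℤ) := by
    have h := (Nat.cast_le (α := ℤ)).mpr hAnat
    push_cast at h
    exact h
  have hB : (∑ k ∈ Finset.range (m - 1), (k : ℤ)) + ((i0 : ℕ) : ℤ)
      ≤ ∑ i ∈ J, ((i : ℕ) : ℤ) := by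
    have h := (Nat.cast_le (α := ℤ)).mpr hBnat
    push_cast at h
    exact h
  have TSr := twice_sum_range r
  have TSs := twice_sum_range s
  have TSm := twice_sum_range (m - 1)
  have hm1c : (((m - 1 : ℕ)) : ℤ) = (m : ℤ) - 1 := by omega
  rw [hm1c] at TSm
  have hhtJ : (ht σ : ℤ) =
      2 * ((∑ i ∈ J, ((σ i : ℕ) : ℤ)) - ∑ i ∈ J, ((i : ℕ) : ℤ)) := by
    rw [hht, Finset.sum_sub_distrib]
  have hr' : (r : ℤ) = (s : ℤ) + (m : ℤ) := by exact_mod_cast hcards.symm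
  have key : (ht σ : ℤ) ≤ 2 * (drops σ : ℤ) * ((r : ℤ) - drops σ) +
      2 * ((r : ℤ) - (drops σ : ℤ) - ((i0 : ℕ) + 1)) := by
    rw [hs]
    calc (ht σ : ℤ) ≤ (r : ℤ) * ((r : ℤ) - 1) - (s : ℤ) * ((s : ℤ) - 1)
          - ((m : ℤ) - 1) * ((m : ℤ) - 1 - 1) - 2 * ((i0 : ℕ) : ℤ) := by
            linarith [hhtJ, hA, hB, TSr, TSs, TSm]
      _ = 2 * (s : ℤ) * ((r : ℤ) - s) + 2 * ((r : ℤ) - (s : ℤ) - ((i0 : ℕ) + 1)) := by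
            rw [hr']; ring
  refine ⟨key, ?_⟩
  have hneg : (r : ℤ) - (drops σ : ℤ) - ((i0 : ℕ) + 1) < 0 := by
    rw [hs, hr']; omega
  linarith [key, hneg]

end PermStats
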